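/- Let Δ ≥ 1 and let a, x be integers with 0 ≤ x and 2x + 1 ≤ a ≤ Δ. Let G be a finite Δ-regular simple graph that admits a proper Δ-edge coloring (an assignment of colors from {1,…,Δ} to the edges such that edges sharing an endpoint receive distinct colors). If G admits a valid Π⁺_Δ(a,x)-labeling, then G admits a valid Π_Δ(⌊(a − 2x − 1)/2⌋, x + 1)-labeling. -/

import Mathlib

inductive Lab : Type
  | M | P | O | A | X
  deriving DecidableEq

instance : Fintype Lab :=
  ⟨{Lab.M, Lab.P, Lab.O, Lab.A, Lab.X}, by intro x; cases x <;> simp⟩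

/-- Node constraint `N_Δ(a,x)`: the three allowed multisets of size `Δ`. -/
def nodeC (Δ a x : ℕ) (m : Multiset Lab) : Prop :=
  m = Multiset.replicate (Δ - x) Lab.M + Multiset.replicate x Lab.X ∨
  m = Multiset.replicate a Lab.A + Multiset.replicate (Δ - a) Lab.X ∨
  m = Lab.P ::ₘ Multiset.replicate (Δ - 1) Lab.O

/-- Edge constraint `E`: all unordered pairs except `{M,M}, {A,A}, {P,P}, {P,A}, {P,O}`. -/
def edgeC (l₁ l₂ : Lab) : Prop :=
  ¬ ((l₁ = Lab.M ∧ l₂ = Lab.M) ∨ (l₁ = Lab.A ∧ l₂ = Lab.A) ∨ (l₁ = Lab.P ∧ l₂ = Lab.P) ∨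
     (l₁ = Lab.P ∧ l₂ = Lab.A) ∨ (l₁ = Lab.A ∧ l₂ = Lab.P) ∨
     (l₁ = Lab.P ∧ l₂ = Lab.O) ∨ (l₁ = Lab.O ∧ l₂ = Lab.P))

instance (l₁ l₂ : Lab) : Decidable (edgeC l₁ l₂) := by
  unfold edgeC; infer_instance

/-- A valid `Π_Δ(a,x)`-labeling: `ℓ u v` is the label that `u` assigns to the edge `{u,v}`. -/
def validLabeling {V : Type*} [Fintype V] (G : SimpleGraph V) [DecidableRel G.Adj]
    (Δ a x : ℕ) (ℓ : V → V → Lab) : Prop :=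
  (∀ v : V, nodeC Δ a x ((G.neighborFinset v).val.map (ℓ v))) ∧
  (∀ u v : V, G.Adj u v → edgeC (ℓ u v) (ℓ v u))

/-- The alphabet `Σ⁺` of `Π⁺_Δ(a,x)`. -/
inductive Lab6 : Type
  | M | P | O | A | X | C
  deriving DecidableEq

instance : Fintype Lab6 :=
  ⟨{Lab6.M, Lab6.P, Lab6.O, Lab6.A, Lab6.X, Lab6.C}, by intro x; cases x <;> simp⟩

/-- Node constraint `N⁺_Δ(a,x)`: the four allowed multisets of size `Δ`. -/
def nodeCPlus (Δ a x : ℕ) (m : Multiset Lab6) : Prop :=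
  m = Multiset.replicate (Δ - x - 1) Lab6.M + Multiset.replicate (x + 1) Lab6.X ∨
  m = Lab6.P ::ₘ Multiset.replicate (Δ - 1) Lab6.O ∨
  m = Multiset.replicate (a - x - 1) Lab6.A + Multiset.replicate (Δ - a + x + 1) Lab6.X ∨
  m = Multiset.replicate (Δ - x) Lab6.C + Multiset.replicate x Lab6.X

/-- Edge constraint `E⁺`: all unordered pairs over `Σ⁺` except
`{M,M}, {A,A}, {P,P}, {P,A}, {P,O}, {P,C}, {C,C}`. -/
def edgeCPlus (l₁ l₂ : Lab6) : Prop :=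
  ¬ ((l₁ = Lab6.M ∧ l₂ = Lab6.M) ∨ (l₁ = Lab6.A ∧ l₂ = Lab6.A) ∨ (l₁ = Lab6.P ∧ l₂ = Lab6.P) ∨
     (l₁ = Lab6.P ∧ l₂ = Lab6.A) ∨ (l₁ = Lab6.A ∧ l₂ = Lab6.P) ∨
     (l₁ = Lab6.P ∧ l₂ = Lab6.O) ∨ (l₁ = Lab6.O ∧ l₂ = Lab6.P) ∨
     (l₁ = Lab6.P ∧ l₂ = Lab6.C) ∨ (l₁ = Lab6.C ∧ l₂ = Lab6.P) ∨
     (l₁ = Lab6.C ∧ l₂ = Lab6.C))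

/-- A valid `Π⁺_Δ(a,x)`-labeling. -/
def validLabelingPlus {V : Type*} [Fintype V] (G : SimpleGraph V) [DecidableRel G.Adj]
    (Δ a x : ℕ) (ℓ : V → V → Lab6) : Prop :=
  (∀ v : V, nodeCPlus Δ a x ((G.neighborFinset v).val.map (ℓ v))) ∧
  (∀ u v : V, G.Adj u v → edgeCPlus (ℓ u v) (ℓ v u))

/-- Forgetful map used for `M`/`P`/`O`/`X`-type vertices. -/
def g6 : Lab6 → Lab
  | Lab6.M => Lab.M
  | Lab6.P => Lab.P
  | Lab6.O => Lab.O
  | _ => Lab.X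

/-- The relabeling function: `b` records whether this half-edge was selected to become `A`. -/
def f6 (l : Lab6) (b : Bool) : Lab :=
  match l with
  | Lab6.M => Lab.M
  | Lab6.P => Lab.P
  | Lab6.O => Lab.O
  | Lab6.X => Lab.X
  | Lab6.A => if b then Lab.A else Lab.X
  | Lab6.C => if b then Lab.A else Lab.X

lemma f6_eq_A {l : Lab6} {b : Bool} : f6 l b = Lab.A ↔ (l = Lab6.A ∨ l = Lab6.C) ∧ b = true := by
  cases l <;> cases b <;> simp [f6]

lemma f6_edge {l1 l2 : Lab6} {b1 b2 : Bool} (h : edgeCPlus l1 l2)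
    (hAC : l1 = Lab6.A → l2 = Lab6.C → b1 = true → b2 = true → False)
    (hCA : l1 = Lab6.C → l2 = Lab6.A → b1 = true → b2 = true → False) :
    edgeC (f6 l1 b1) (f6 l2 b2) := by
  cases l1 <;> cases l2 <;> cases b1 <;> cases b2 <;>
    first
      | decide
      | exact (hAC rfl rfl rfl rfl).elim
      | exact (hCA rfl rfl rfl rfl).elim
      | exact (h (by decide)).elim

/-- In a finite `Δ`-regular simple graph admitting a proper `Δ`-edge
coloring, any valid `Π⁺_Δ(a,x)`-labeling can be turned into a valid
`Π_Δ(⌊(a − 2x − 1)/2⌋, x + 1)`-labeling. -/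
theorem stmt_4 {V : Type*} [Fintype V] (G : SimpleGraph V) [DecidableRel G.Adj]
    (Δ a x : ℕ) (hΔ : 1 ≤ Δ) (hax : 2 * x + 1 ≤ a) (haΔ : a ≤ Δ) (hxΔ : x ≤ Δ)
    (hreg : G.IsRegularOfDegree Δ)
    (c : V → V → Fin Δ)
    (hcsym : ∀ u v, G.Adj u v → c u v = c v u)
    (hcproper : ∀ u v w, G.Adj u v → G.Adj u w → v ≠ w → c u v ≠ c u w)
    (ℓp : V → V → Lab6) (hvalid : validLabelingPlus G Δ a x ℓp) :
    ∃ ℓ : V → V → Lab, validLabeling G Δ ((a - 2 * x - 1) / 2) (x + 1) ℓ := by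
  classical
  obtain ⟨hnode, hedge⟩ := hvalid
  set p := (a - 2 * x - 1) / 2 with hp
  -- the eligible half-edges
  have hKex : ∀ v : V, ∃ t ⊆ (G.neighborFinset v).filter (fun u =>
      (ℓp v u = Lab6.A ∧ p + x ≤ (c v u).val) ∨
      (ℓp v u = Lab6.C ∧ (c v u).val < p + x)),
      t.card = min p ((G.neighborFinset v).filter (fun u =>
      (ℓp v u = Lab6.A ∧ p + x ≤ (c v u).val) ∨
      (ℓp v u = Lab6.C ∧ (c v u).val < p + x))).card :=
    fun v => Finset.exists_subset_card_eq (min_le_right _ _)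
  choose K hKsub hKcard using hKex
  have hKmem : ∀ v u, u ∈ K v → u ∈ G.neighborFinset v ∧
      ((ℓp v u = Lab6.A ∧ p + x ≤ (c v u).val) ∨
       (ℓp v u = Lab6.C ∧ (c v u).val < p + x)) :=
    fun v u hu => Finset.mem_filter.mp (hKsub v hu)
  set f : V → V → Lab := fun v u => f6 (ℓp v u) (decide (u ∈ K v)) with hf
  have hdeg : ∀ v, (G.neighborFinset v).card = Δ := fun v => hreg v
  -- the Finset of new-`A` half-edges at `v` is exactly `K v`
  have hfA : ∀ v, (G.neighborFinset v).filter (fun u => Lab.A = f v u) = K v := by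
    intro v
    ext u
    simp only [Finset.mem_filter]
    constructor
    · rintro ⟨-, hA⟩
      have h2 := (f6_eq_A.mp hA.symm).2
      simpa using h2
    · intro hu
      obtain ⟨hnb, hpred⟩ := hKmem v u hu
      refine ⟨hnb, ?_⟩
      rcases hpred with ⟨hl, -⟩ | ⟨hl, -⟩ <;> simp [hf, hl, f6, hu]
  -- injectivity of colors on neighborhoods
  have hinj : ∀ v, ∀ u ∈ G.neighborFinset v, ∀ w ∈ G.neighborFinset v,
      (c v u).val = (c v w).val → u = w := by
    intro v u hu w hw h
    by_contra hne
    exact hcproper v u w (by simpa using hu) (by simpa using hw) hne (Fin.ext h)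
  -- count of an old label as a Finset card
  have hcount : ∀ v (l : Lab6) (m : Multiset Lab6),
      (G.neighborFinset v).val.map (ℓp v) = m →
      ((G.neighborFinset v).filter (fun u => l = ℓp v u)).card = m.count l := by
    intro v l m hm
    have h := congrArg (Multiset.count l) hm
    rw [Multiset.count_map] at h
    exact h
  -- membership of old labels
  have hmemlab : ∀ v (m : Multiset Lab6), (G.neighborFinset v).val.map (ℓp v) = m →
      ∀ u ∈ G.neighborFinset v, ℓp v u ∈ m := by
    intro v m hm u hu
    rw [← hm]
    exact Multiset.mem_map_of_mem _ (by simpa using hu)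
  -- the common node-multiset computation at `A`/`C`-type vertices
  have build : ∀ v, (∀ u ∈ G.neighborFinset v,
        ℓp v u = Lab6.A ∨ ℓp v u = Lab6.C ∨ ℓp v u = Lab6.X) → (K v).card = p →
      (G.neighborFinset v).val.map (f v) =
        Multiset.replicate p Lab.A + Multiset.replicate (Δ - p) Lab.X := by
    intro v hmem hKc
    have hAorX : ∀ u ∈ G.neighborFinset v, f v u = Lab.A ∨ f v u = Lab.X := by
      intro u hu
      rcases hmem u hu with h | h | h <;> simp [hf, h, f6] <;>
        try exact em _
    refine Multiset.ext.mpr fun l => ?_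
    have hbridge : ∀ q : Lab, Multiset.count q ((G.neighborFinset v).val.map (f v)) =
        ((G.neighborFinset v).filter (fun u => q = f v u)).card := by
      intro q; rw [Multiset.count_map]; rfl
    have hsplit := Finset.card_filter_add_card_filter_not
      (s := G.neighborFinset v) (p := fun u => Lab.A = f v u)
    rw [hfA v, hdeg v] at hsplit
    cases l with
    | A =>
        rw [hbridge, hfA v, hKc]
        simp [Multiset.count_replicate]
    | X =>
        rw [hbridge]
        have hXeq : (G.neighborFinset v).filter (fun u => Lab.X = f v u) =
            (G.neighborFinset v).filter (fun u => ¬ (Lab.A = f v u)) := by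
          apply Finset.filter_congr
          intro u hu
          rcases hAorX u hu with h | h <;> simp [h]
        rw [hXeq]
        simp only [Multiset.count_add, Multiset.count_replicate]
        simp only [hKc] at hsplit
        simp only [reduceIte, reduceCtorEq, if_false, if_neg]
        omega
    | M =>
        rw [hbridge]
        have h0 : (G.neighborFinset v).filter (fun u => Lab.M = f v u) = ∅ := by
          rw [Finset.filter_eq_empty_iff]
          intro u hu
          rcases hAorX u hu with h | h <;> simp [h]
        rw [h0]
        simp [Multiset.count_replicate]
    | P =>
        rw [hbridge]
        have h0 : (G.neighborFinset v).filter (fun u => Lab.P = f v u) = ∅ := by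
          rw [Finset.filter_eq_empty_iff]
          intro u hu
          rcases hAorX u hu with h | h <;> simp [h]
        rw [h0]
        simp [Multiset.count_replicate]
    | O =>
        rw [hbridge]
        have h0 : (G.neighborFinset v).filter (fun u => Lab.O = f v u) = ∅ := by
          rw [Finset.filter_eq_empty_iff]
          intro u hu
          rcases hAorX u hu with h | h <;> simp [h]
        rw [h0]
        simp [Multiset.count_replicate]
  refine ⟨f, ?_, ?_⟩
  · -- node constraint
    intro v
    unfold nodeC
    rcases hnode v with hm | hm | hm | hm
    · -- M-type
      left
      have hmem : ∀ u ∈ G.neighborFinset v, ℓp v u = Lab6.M ∨ ℓp v u = Lab6.X := by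
        intro u hu
        have h := hmemlab v _ hm u hu
        rcases Multiset.mem_add.mp h with h | h <;>
          [left; right] <;> exact Multiset.eq_of_mem_replicate h
      have hcongr : (G.neighborFinset v).val.map (f v) =
          (G.neighborFinset v).val.map (fun u => g6 (ℓp v u)) := by
        apply Multiset.map_congr rfl
        intro u hu
        rcases hmem u (by simpa using hu) with h | h <;> simp [hf, h, f6, g6]
      rw [hcongr, show (fun u => g6 (ℓp v u)) = g6 ∘ (ℓp v) from rfl,
        ← Multiset.map_map, hm]
      simp only [Multiset.map_add, Multiset.map_replicate]
      rw [show Δ - x - 1 = Δ - (x + 1) from by omega]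
      rfl
    · -- P-type
      right; right
      have hmem : ∀ u ∈ G.neighborFinset v, ℓp v u = Lab6.P ∨ ℓp v u = Lab6.O := by
        intro u hu
        have h := hmemlab v _ hm u hu
        rcases Multiset.mem_cons.mp h with h | h
        · left; exact h
        · right; exact Multiset.eq_of_mem_replicate h
      have hcongr : (G.neighborFinset v).val.map (f v) =
          (G.neighborFinset v).val.map (fun u => g6 (ℓp v u)) := by
        apply Multiset.map_congr rfl
        intro u hu
        rcases hmem u (by simpa using hu) with h | h <;> simp [hf, h, f6, g6]
      rw [hcongr, show (fun u => g6 (ℓp v u)) = g6 ∘ (ℓp v) from rfl,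
        ← Multiset.map_map, hm]
      simp [Multiset.map_replicate, g6]
    · -- A-type
      right; left
      have hmem : ∀ u ∈ G.neighborFinset v, ℓp v u = Lab6.A ∨ ℓp v u = Lab6.X := by
        intro u hu
        have h := hmemlab v _ hm u hu
        rcases Multiset.mem_add.mp h with h | h <;>
          [left; right] <;> exact Multiset.eq_of_mem_replicate h
      have hTcard : ((G.neighborFinset v).filter (fun u => Lab6.A = ℓp v u)).card
          = a - x - 1 := by
        rw [hcount v Lab6.A _ hm]
        simp [Multiset.count_replicate]
      have hsplit := Finset.card_filter_add_card_filter_not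
        (s := (G.neighborFinset v).filter (fun u => Lab6.A = ℓp v u))
        (p := fun u => p + x ≤ (c v u).val)
      have hbad : (((G.neighborFinset v).filter (fun u => Lab6.A = ℓp v u)).filter
          (fun u => ¬ p + x ≤ (c v u).val)).card ≤ p + x := by
        have hle := Finset.card_le_card_of_injOn
          (s := ((G.neighborFinset v).filter (fun u => Lab6.A = ℓp v u)).filter
            (fun u => ¬ p + x ≤ (c v u).val))
          (fun u => (c v u).val)
          (t := Finset.range (p + x)) (fun u hu => by
            simp only [Finset.coe_filter, Set.mem_setOf_eq, Finset.mem_filter] at hu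
            simp only [Finset.coe_range, Set.mem_Iio, Finset.mem_range]
            omega)
          (fun u hu w hw h => by
            simp only [Finset.coe_filter, Set.mem_setOf_eq, Finset.mem_filter] at hu hw
            exact hinj v u hu.1.1 w hw.1.1 h)
        simpa using hle
      have hgoodsub : ((G.neighborFinset v).filter (fun u => Lab6.A = ℓp v u)).filter
          (fun u => p + x ≤ (c v u).val) ⊆ (G.neighborFinset v).filter (fun u =>
          (ℓp v u = Lab6.A ∧ p + x ≤ (c v u).val) ∨
          (ℓp v u = Lab6.C ∧ (c v u).val < p + x)) := by
        intro u hu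
        simp only [Finset.mem_filter] at hu ⊢
        exact ⟨hu.1.1, Or.inl ⟨hu.1.2.symm, hu.2⟩⟩
      have hKc : (K v).card = p := by
        rw [hKcard v]
        apply Nat.min_eq_left
        calc p ≤ (((G.neighborFinset v).filter (fun u => Lab6.A = ℓp v u)).filter
            (fun u => p + x ≤ (c v u).val)).card := by omega
          _ ≤ _ := Finset.card_le_card hgoodsub
      exact build v (fun u hu => by rcases hmem u hu with h | h <;> simp [h]) hKc
    · -- C-type
      right; left
      have hmem : ∀ u ∈ G.neighborFinset v, ℓp v u = Lab6.C ∨ ℓp v u = Lab6.X := by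
        intro u hu
        have h := hmemlab v _ hm u hu
        rcases Multiset.mem_add.mp h with h | h <;>
          [left; right] <;> exact Multiset.eq_of_mem_replicate h
      have hTcard : ((G.neighborFinset v).filter (fun u => Lab6.C = ℓp v u)).card
          = Δ - x := by
        rw [hcount v Lab6.C _ hm]
        simp [Multiset.count_replicate]
      have hsplit := Finset.card_filter_add_card_filter_not
        (s := (G.neighborFinset v).filter (fun u => Lab6.C = ℓp v u))
        (p := fun u => (c v u).val < p + x)
      have hbad : (((G.neighborFinset v).filter (fun u => Lab6.C = ℓp v u)).filter
          (fun u => ¬ (c v u).val < p + x)).card ≤ Δ - (p + x) := by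
        have hle := Finset.card_le_card_of_injOn
          (s := ((G.neighborFinset v).filter (fun u => Lab6.C = ℓp v u)).filter
            (fun u => ¬ (c v u).val < p + x))
          (fun u => (c v u).val - (p + x))
          (t := Finset.range (Δ - (p + x))) (fun u hu => by
            simp only [Finset.coe_filter, Set.mem_setOf_eq, Finset.mem_filter] at hu
            simp only [Finset.coe_range, Set.mem_Iio, Finset.mem_range]
            have hlt := (c v u).isLt
            omega)
          (fun u hu w hw h => by
            simp only [Finset.coe_filter, Set.mem_setOf_eq, Finset.mem_filter] at hu hw
            apply hinj v u hu.1.1 w hw.1.1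
            simp only at h
            omega)
        simpa using hle
      have hgoodsub : ((G.neighborFinset v).filter (fun u => Lab6.C = ℓp v u)).filter
          (fun u => (c v u).val < p + x) ⊆ (G.neighborFinset v).filter (fun u =>
          (ℓp v u = Lab6.A ∧ p + x ≤ (c v u).val) ∨
          (ℓp v u = Lab6.C ∧ (c v u).val < p + x)) := by
        intro u hu
        simp only [Finset.mem_filter] at hu ⊢
        exact ⟨hu.1.1, Or.inr ⟨hu.1.2.symm, hu.2⟩⟩
      have hKc : (K v).card = p := by
        rw [hKcard v]
        apply Nat.min_eq_left
        calc p ≤ (((G.neighborFinset v).filter (fun u => Lab6.C = ℓp v u)).filter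
            (fun u => (c v u).val < p + x)).card := by omega
          _ ≤ _ := Finset.card_le_card hgoodsub
      exact build v (fun u hu => by rcases hmem u hu with h | h <;> simp [h]) hKc
  · -- edge constraint
    intro u v huv
    have he := hedge u v huv
    have hcross : ∀ u v, G.Adj u v → ℓp u v = Lab6.A → ℓp v u = Lab6.C →
        v ∈ K u → u ∈ K v → False := by
      intro u v huv h1 h2 hvK huK
      have m1 := (hKmem u v hvK).2
      have m2 := (hKmem v u huK).2
      rw [h1] at m1
      rw [h2] at m2
      simp only [reduceCtorEq, false_and, or_false, true_and, false_or] at m1 m2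
      rw [hcsym u v huv] at m1
      omega
    show edgeC (f u v) (f v u)
    refine f6_edge he ?_ ?_
    · intro e1 e2 b1 b2
      exact hcross u v huv e1 e2 (by simpa using b1) (by simpa using b2)
    · intro e1 e2 b1 b2
      exact hcross v u huv.symm e2 e1 (by simpa using b2) (by simpa using b1)
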